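/- Let q ≥ 2 be an integer and let f be a probability density function on [0,1) that is lower semi-continuous at Lebesgue-almost every point of [0,1). Then there exists a probability space carrying a random variable Y with values in [0,1) whose law has density f, and a random variable N with values in the non-negative integers, such that T^N(Y) is uniformly distributed on [0,1) and independent of (N, ⌊q^N Y⌋), and moreover for every n ≥ 0 and every Borel set A ⊆ [0,1): P(N ≤ n and Y ∈ A) = Σ_{k=0}^n Σ_{j=1}^{q^k} c_{j;k} · μ(A ∩ I_{j;k}), where μ is Lebesgue measure. -/

import Mathlib

open MeasureTheory Set

/-- The base-`q` map `T(x) = q·x − ⌊q·x⌋`. -/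
noncomputable def T (q : ℕ) : ℝ → ℝ := fun x => Int.fract ((q : ℝ) * x)

/-- The interval `I_{k;n} = [(k−1)q^{−n}, k·q^{−n})`. -/
noncomputable def Ikn (q n k : ℕ) : Set ℝ :=
  Set.Ico (((k : ℝ) - 1) / (q : ℝ) ^ n) ((k : ℝ) / (q : ℝ) ^ n)

/-- The constants `c_{k;n}`: `c_{1;0} = inf_{[0,1)} f` and, for `n ≥ 1`,
`c_{k;n} = inf_{I_{k;n}} f − inf_{I_{⌈k/q⌉;n−1}} f` (noting `⌈k/q⌉ = (k+q−1)/q`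
in natural division). -/
noncomputable def ckn (f : ℝ → ℝ) (q k n : ℕ) : ℝ :=
  if n = 0 then sInf (f '' Ikn q 0 1)
  else sInf (f '' Ikn q n k) - sInf (f '' Ikn q (n - 1) ((k + q - 1) / q))

section Aux

variable {q : ℕ} {f : ℝ → ℝ}

lemma qpow_pos (hq : 2 ≤ q) (n : ℕ) : (0:ℝ) < (q:ℝ) ^ n := by positivity

lemma Ikn_nonempty (hq : 2 ≤ q) (n k : ℕ) : (Ikn q n k).Nonempty := by
  rw [Ikn, Set.nonempty_Ico]
  have := qpow_pos hq n
  gcongr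
  linarith

lemma bddBelow_image (hf : ∀ x, 0 ≤ f x) (s : Set ℝ) : BddBelow (f '' s) :=
  ⟨0, by rintro y ⟨x, -, rfl⟩; exact hf x⟩

lemma sInf_image_nonneg (hf : ∀ x, 0 ≤ f x) (s : Set ℝ) : 0 ≤ sInf (f '' s) :=
  Real.sInf_nonneg (by rintro y ⟨x, -, rfl⟩; exact hf x)

lemma parent_idx (hq : 2 ≤ q) {j : ℕ} (hj : 1 ≤ j) : (j + q - 1) / q = (j - 1) / q + 1 := by
  have h1 : j + q - 1 = (j - 1) + q := by omega
  rw [h1, Nat.add_div_right _ (by omega)]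

lemma Ikn_subset (hq : 2 ≤ q) {j : ℕ} (hj : 1 ≤ j) (n : ℕ) :
    Ikn q (n + 1) j ⊆ Ikn q n ((j - 1) / q + 1) := by
  have hq0 : (0:ℝ) < (q:ℝ) := by positivity
  have hqn : (0:ℝ) < (q:ℝ) ^ n := qpow_pos hq n
  have hqn1 : (0:ℝ) < (q:ℝ) ^ (n+1) := qpow_pos hq (n+1)
  set m := (j - 1) / q with hm
  have h1 : q * m ≤ j - 1 := Nat.mul_div_le _ _
  have h2 : j - 1 < q * (m + 1) := by
    rw [mul_comm]
    exact (Nat.div_lt_iff_lt_mul (show 0 < q by omega)).mp (by omega)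
  have hr1 : (q:ℝ) * (m:ℝ) ≤ (j:ℝ) - 1 := by
    have : ((q * m : ℕ) : ℝ) ≤ ((j - 1 : ℕ) : ℝ) := by exact_mod_cast h1
    push_cast at this
    rw [Nat.cast_sub hj] at this
    push_cast at this
    linarith
  have hr2 : (j:ℝ) ≤ (q:ℝ) * ((m:ℝ) + 1) := by
    have h2' : j ≤ q * (m + 1) := by omega
    exact_mod_cast h2'
  rintro x ⟨hx1, hx2⟩
  have hps : (q:ℝ) ^ (n+1) = (q:ℝ)^n * q := pow_succ (q:ℝ) n
  constructor
  · have : (((m + 1 : ℕ)):ℝ) - 1 = (m:ℝ) := by push_cast; ring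
    rw [this]
    calc (m:ℝ) / (q:ℝ)^n = (q:ℝ) * m / (q:ℝ)^(n+1) := by rw [hps]; field_simp
      _ ≤ ((j:ℝ) - 1) / (q:ℝ)^(n+1) := by gcongr
      _ ≤ x := hx1
  · calc x < (j:ℝ) / (q:ℝ)^(n+1) := hx2
      _ ≤ ((q:ℝ) * ((m:ℝ)+1)) / (q:ℝ)^(n+1) := by gcongr
      _ = (((m + 1:ℕ)):ℝ) / (q:ℝ)^n := by rw [hps]; push_cast; field_simp

lemma ckn_nonneg (hq : 2 ≤ q) (hf : ∀ x, 0 ≤ f x) {j : ℕ} (hj : 1 ≤ j) (n : ℕ) :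
    0 ≤ ckn f q j n := by
  rcases n with _ | m
  · simpa [ckn] using sInf_image_nonneg hf _
  · rw [ckn]
    simp only [Nat.succ_ne_zero, if_false, Nat.succ_sub_one]
    rw [sub_nonneg, parent_idx hq hj]
    apply csInf_le_csInf (bddBelow_image hf _)
    · exact (Ikn_nonempty hq _ _).image f
    · exact Set.image_mono (Ikn_subset hq hj m)

end Aux

section Aux2

variable {q : ℕ} {f : ℝ → ℝ}

noncomputable def sI (f : ℝ → ℝ) (q n : ℕ) (x : ℝ) : ℝ :=
  sInf (f '' Ikn q n (⌊x * (q:ℝ) ^ n⌋₊ + 1))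

lemma mem_Ikn_floor (hq : 2 ≤ q) {x : ℝ} (hx : x ∈ Set.Ico (0:ℝ) 1) (n : ℕ) :
    x ∈ Ikn q n (⌊x * (q:ℝ) ^ n⌋₊ + 1) := by
  have hqn : (0:ℝ) < (q:ℝ) ^ n := qpow_pos hq n
  have h0 : 0 ≤ x * (q:ℝ)^n := mul_nonneg hx.1 hqn.le
  constructor
  · rw [div_le_iff₀ hqn]
    push_cast
    have := Nat.floor_le h0
    linarith
  · rw [lt_div_iff₀ hqn]
    push_cast
    have := Nat.lt_floor_add_one (x * (q:ℝ)^n)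
    linarith

lemma floor_succ_le (hq : 2 ≤ q) {x : ℝ} (hx : x ∈ Set.Ico (0:ℝ) 1) (n : ℕ) :
    ⌊x * (q:ℝ) ^ n⌋₊ + 1 ≤ q ^ n := by
  have hqn : (0:ℝ) < (q:ℝ) ^ n := qpow_pos hq n
  have : ⌊x * (q:ℝ)^n⌋₊ < q ^ n := by
    rw [Nat.floor_lt (mul_nonneg hx.1 hqn.le)]
    push_cast
    nlinarith [hx.2]
  omega

lemma eq_floor_of_mem (hq : 2 ≤ q) {x : ℝ} (hx0 : 0 ≤ x) {n j : ℕ} (hj : 1 ≤ j)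
    (h : x ∈ Ikn q n j) : j = ⌊x * (q:ℝ) ^ n⌋₊ + 1 := by
  have hqn : (0:ℝ) < (q:ℝ) ^ n := qpow_pos hq n
  obtain ⟨h1, h2⟩ := h
  rw [div_le_iff₀ hqn] at h1
  rw [lt_div_iff₀ hqn] at h2
  have hfl : ⌊x * (q:ℝ)^n⌋₊ = j - 1 := by
    rw [Nat.floor_eq_iff (mul_nonneg hx0 hqn.le)]
    constructor
    · rw [Nat.cast_sub hj]; push_cast; linarith
    · rw [Nat.cast_sub hj]; push_cast; linarith
  omega

lemma floor_div_q (hq : 2 ≤ q) {x : ℝ} (hx0 : 0 ≤ x) (n : ℕ) :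
    ⌊x * (q:ℝ) ^ (n + 1)⌋₊ / q = ⌊x * (q:ℝ) ^ n⌋₊ := by
  have hq0 : (q:ℝ) ≠ 0 := by positivity
  rw [← Nat.floor_div_natCast]
  congr 1
  rw [pow_succ]
  field_simp

lemma telescope (hq : 2 ≤ q) (hf : ∀ x, 0 ≤ f x) {x : ℝ} (hx : x ∈ Set.Ico (0:ℝ) 1) (n : ℕ) :
    ∑ k ∈ Finset.range (n + 1), ∑ j ∈ Finset.Icc 1 (q ^ k),
      ckn f q j k * Set.indicator (Ikn q k j) (fun _ => (1:ℝ)) x = sI f q n x := by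
  induction n with
  | zero =>
    have hfl : ⌊x * (q:ℝ)^0⌋₊ = 0 := by
      simp only [pow_zero, mul_one]
      exact Nat.floor_eq_zero.mpr hx.2
    have hmem : x ∈ Ikn q 0 1 := by
      have := mem_Ikn_floor hq hx 0
      rwa [hfl] at this
    rw [sI, hfl, zero_add, Finset.range_one, Finset.sum_singleton, pow_zero,
      Finset.Icc_self, Finset.sum_singleton, Set.indicator_of_mem hmem]
    simp [ckn]
  | succ n ih =>
    rw [Finset.sum_range_succ, ih]
    set j0 := ⌊x * (q:ℝ)^(n+1)⌋₊ + 1 with hj0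
    have hj0mem : j0 ∈ Finset.Icc 1 (q ^ (n+1)) := by
      rw [Finset.mem_Icc]
      exact ⟨by omega, floor_succ_le hq hx (n+1)⟩
    have hsum : ∑ j ∈ Finset.Icc 1 (q ^ (n+1)),
        ckn f q j (n+1) * Set.indicator (Ikn q (n+1) j) (fun _ => (1:ℝ)) x
        = ckn f q j0 (n+1) := by
      rw [Finset.sum_eq_single_of_mem j0 hj0mem]
      · rw [Set.indicator_of_mem (mem_Ikn_floor hq hx (n+1)), mul_one]
      · intro j hj hne
        rw [Finset.mem_Icc] at hj
        rw [Set.indicator_of_notMem, mul_zero]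
        intro hmem
        exact hne (eq_floor_of_mem hq hx.1 hj.1 hmem)
    rw [hsum]
    have hpar : (j0 + q - 1) / q = ⌊x * (q:ℝ)^n⌋₊ + 1 := by
      rw [parent_idx hq (by omega)]
      have : j0 - 1 = ⌊x * (q:ℝ)^(n+1)⌋₊ := by omega
      rw [this, floor_div_q hq hx.1]
    rw [ckn]
    simp only [Nat.succ_ne_zero, if_false, Nat.add_sub_cancel]
    rw [hpar]
    rw [sI, sI]
    ring

end Aux2

section Aux3

variable {q : ℕ} {f : ℝ → ℝ}

lemma sI_mono (hq : 2 ≤ q) (hf : ∀ x, 0 ≤ f x) {x : ℝ} (hx : x ∈ Set.Ico (0:ℝ) 1) :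
    Monotone (fun n => sI f q n x) := by
  apply monotone_nat_of_le_succ
  intro n
  simp only [sI]
  apply csInf_le_csInf (bddBelow_image hf _) ((Ikn_nonempty hq _ _).image f)
  apply Set.image_mono
  have h := Ikn_subset hq (j := ⌊x * (q:ℝ)^(n+1)⌋₊ + 1) (by omega) n
  have he : (⌊x * (q:ℝ)^(n+1)⌋₊ + 1 - 1) / q + 1 = ⌊x * (q:ℝ)^n⌋₊ + 1 := by
    rw [Nat.add_sub_cancel, floor_div_q hq hx.1]
  rwa [he] at h

lemma sI_le_f (hq : 2 ≤ q) (hf : ∀ x, 0 ≤ f x) {x : ℝ} (hx : x ∈ Set.Ico (0:ℝ) 1) (n : ℕ) :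
    sI f q n x ≤ f x :=
  csInf_le (bddBelow_image hf _) ⟨x, mem_Ikn_floor hq hx n, rfl⟩

lemma Ikn_floor_subset_ball (hq : 2 ≤ q) {x : ℝ} (hx : x ∈ Set.Ico (0:ℝ) 1) (n : ℕ)
    {ε : ℝ} (hε : ((q:ℝ) ^ n)⁻¹ ≤ ε) :
    Ikn q n (⌊x * (q:ℝ) ^ n⌋₊ + 1) ⊆ Set.Ioo (x - ε) (x + ε) := by
  have hqn : (0:ℝ) < (q:ℝ) ^ n := qpow_pos hq n
  obtain ⟨ha, hb⟩ := mem_Ikn_floor hq hx n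
  rintro z ⟨hz1, hz2⟩
  constructor
  · have : (((⌊x * (q:ℝ)^n⌋₊ + 1 : ℕ)):ℝ) / (q:ℝ)^n
        = ((((⌊x * (q:ℝ)^n⌋₊ + 1 : ℕ)):ℝ) - 1) / (q:ℝ)^n + ((q:ℝ)^n)⁻¹ := by
      field_simp
      ring
    nlinarith [hb.trans_le (le_of_eq this)]
  · have : (((⌊x * (q:ℝ)^n⌋₊ + 1 : ℕ)):ℝ) / (q:ℝ)^n
        = ((((⌊x * (q:ℝ)^n⌋₊ + 1 : ℕ)):ℝ) - 1) / (q:ℝ)^n + ((q:ℝ)^n)⁻¹ := by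
      field_simp
      ring
    have := hz2.trans_le (le_of_eq this)
    nlinarith

lemma sI_tendsto (hq : 2 ≤ q) (hf : ∀ x, 0 ≤ f x) {x : ℝ} (hx : x ∈ Set.Ico (0:ℝ) 1)
    (hlsc : LowerSemicontinuousAt f x) :
    Filter.Tendsto (fun n => sI f q n x) Filter.atTop (nhds (f x)) := by
  rw [tendsto_order]
  constructor
  · intro y hy
    set y' := (y + f x) / 2 with hy'
    have hyy' : y < y' := by rw [hy']; linarith
    have hy'f : y' < f x := by rw [hy']; linarith
    have := hlsc y' hy'f
    obtain ⟨δ, hδ, hball⟩ := Metric.eventually_nhds_iff.mp this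
    have hqinv : (0:ℝ) < (q:ℝ)⁻¹ := by
      have : (0:ℝ) < (q:ℝ) := by positivity
      positivity
    have hqlt1 : (q:ℝ)⁻¹ < 1 := by
      rw [inv_lt_one_iff₀]; right; exact_mod_cast by omega
    obtain ⟨n0, hn0⟩ := exists_pow_lt_of_lt_one hδ hqlt1
    rw [Filter.eventually_atTop]
    refine ⟨n0, fun n hn => ?_⟩
    have hle : ((q:ℝ) ^ n)⁻¹ ≤ (q:ℝ)⁻¹ ^ n0 := by
      rw [← inv_pow]
      exact pow_le_pow_of_le_one hqinv.le hqlt1.le hn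
    have hsub : Ikn q n (⌊x * (q:ℝ)^n⌋₊ + 1) ⊆ Set.Ioo (x - δ) (x + δ) :=
      Ikn_floor_subset_ball hq hx n (hle.trans hn0.le)
    have hle' : y' ≤ sI f q n x := by
      apply le_csInf ((Ikn_nonempty hq _ _).image f)
      rintro b ⟨z, hz, rfl⟩
      have hzball : dist z x < δ := by
        obtain ⟨h1, h2⟩ := hsub hz
        rw [Real.dist_eq, abs_lt]
        constructor <;> linarith
      exact (hball hzball).le
    exact lt_of_lt_of_le hyy' hle'
  · intro y hy
    filter_upwards with n
    exact lt_of_le_of_lt (sI_le_f hq hf hx n) hy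

end Aux3

open scoped ENNReal

section Aux4

variable {q : ℕ} {f : ℝ → ℝ}

lemma Ikn_subset_Ico (hq : 2 ≤ q) {k j : ℕ} (hj1 : 1 ≤ j) (hj2 : j ≤ q ^ k) :
    Ikn q k j ⊆ Set.Ico (0:ℝ) 1 := by
  have hqk : (0:ℝ) < (q:ℝ) ^ k := qpow_pos hq k
  rintro x ⟨h1, h2⟩
  constructor
  · refine le_trans ?_ h1
    apply div_nonneg _ hqk.le
    have : (1:ℝ) ≤ (j:ℝ) := by exact_mod_cast hj1
    linarith
  · refine lt_of_lt_of_le h2 ?_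
    rw [div_le_one hqk]
    exact_mod_cast hj2

lemma vol_Ikn (hq : 2 ≤ q) (k j : ℕ) :
    volume (Ikn q k j) = ENNReal.ofReal (((q:ℝ) ^ k)⁻¹) := by
  have hqk : (0:ℝ) < (q:ℝ) ^ k := qpow_pos hq k
  rw [Ikn, Real.volume_Ico]
  congr 1
  field_simp
  ring

/-- the pointwise density identity -/
lemma D_eq (hq : 2 ≤ q) (hf : ∀ x, 0 ≤ f x) (hsupp : ∀ x, x ∉ Set.Ico (0:ℝ) 1 → f x = 0)
    {x : ℝ} (hx : x ∉ Set.Ico (0:ℝ) 1 ∨ (x ∈ Set.Ico (0:ℝ) 1 ∧ LowerSemicontinuousAt f x)) :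
    ∑' (p : ℕ × ℕ), (if p.2 ∈ Finset.Icc 1 (q ^ p.1) then ENNReal.ofReal (ckn f q p.2 p.1) else 0)
        * Set.indicator (Ikn q p.1 p.2) (1 : ℝ → ℝ≥0∞) x
      = ENNReal.ofReal (f x) := by
  rcases hx with hx | ⟨hx, hlsc⟩
  · rw [hsupp x hx, ENNReal.ofReal_zero]
    apply ENNReal.tsum_eq_zero.mpr
    rintro ⟨k, j⟩
    by_cases hj : j ∈ Finset.Icc 1 (q ^ k)
    · rw [Finset.mem_Icc] at hj
      rw [Set.indicator_of_notMem (fun hmem => hx (Ikn_subset_Ico hq hj.1 hj.2 hmem)), mul_zero]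
    · rw [if_neg hj, zero_mul]
  · rw [ENNReal.tsum_prod (f := fun k j =>
      (if j ∈ Finset.Icc 1 (q ^ k) then ENNReal.ofReal (ckn f q j k) else 0)
        * Set.indicator (Ikn q k j) (1 : ℝ → ℝ≥0∞) x)]
    have hinner : ∀ k : ℕ, (∑' j : ℕ,
        (if j ∈ Finset.Icc 1 (q ^ k) then ENNReal.ofReal (ckn f q j k) else 0)
          * Set.indicator (Ikn q k j) (1 : ℝ → ℝ≥0∞) x)
        = ENNReal.ofReal (∑ j ∈ Finset.Icc 1 (q ^ k),
            ckn f q j k * Set.indicator (Ikn q k j) (fun _ => (1:ℝ)) x) := by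
      intro k
      rw [tsum_eq_sum (s := Finset.Icc 1 (q ^ k)) (fun j hj => by rw [if_neg hj, zero_mul])]
      rw [ENNReal.ofReal_sum_of_nonneg (fun j hj => by
        rw [Finset.mem_Icc] at hj
        exact mul_nonneg (ckn_nonneg hq hf hj.1 k) (Set.indicator_nonneg (fun _ _ => zero_le_one) x))]
      apply Finset.sum_congr rfl
      intro j hj
      rw [if_pos hj]
      by_cases hmem : x ∈ Ikn q k j
      · simp [Set.indicator_of_mem hmem]
      · simp [Set.indicator_of_notMem hmem]
    simp_rw [hinner]
    rw [ENNReal.tsum_eq_iSup_nat]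
    have hP : ∀ n : ℕ, ∑ k ∈ Finset.range (n + 1), ENNReal.ofReal
        (∑ j ∈ Finset.Icc 1 (q ^ k), ckn f q j k * Set.indicator (Ikn q k j) (fun _ => (1:ℝ)) x)
        = ENNReal.ofReal (sI f q n x) := by
      intro n
      rw [← ENNReal.ofReal_sum_of_nonneg (fun k _ => Finset.sum_nonneg (fun j hj => by
        rw [Finset.mem_Icc] at hj
        exact mul_nonneg (ckn_nonneg hq hf hj.1 k)
          (Set.indicator_nonneg (fun _ _ => zero_le_one) x)))]
      rw [telescope hq hf hx n]
    have hmono : Monotone (fun n => ∑ k ∈ Finset.range n, ENNReal.ofReal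
        (∑ j ∈ Finset.Icc 1 (q ^ k), ckn f q j k * Set.indicator (Ikn q k j) (fun _ => (1:ℝ)) x)) :=
      fun a b hab => Finset.sum_le_sum_of_subset (Finset.range_subset_range.mpr hab)
    refine tendsto_nhds_unique (tendsto_atTop_iSup hmono) ?_
    rw [← Filter.tendsto_add_atTop_iff_nat 1]
    simp_rw [hP]
    exact (ENNReal.tendsto_ofReal (sI_tendsto hq hf hx hlsc))

set_option maxHeartbeats 1000000 in
/-- the key lintegral computation -/
lemma key (hq : 2 ≤ q) (hf_meas : Measurable f) (hf : ∀ x, 0 ≤ f x)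
    (hsupp : ∀ x, x ∉ Set.Ico (0:ℝ) 1 → f x = 0)
    (hlsc : ∀ᵐ x ∂(volume : Measure ℝ), x ∈ Set.Ico (0:ℝ) 1 → LowerSemicontinuousAt f x)
    (A : Set ℝ) (hA : MeasurableSet A) :
    ∑' (p : ℕ × ℕ), (if p.2 ∈ Finset.Icc 1 (q ^ p.1) then ENNReal.ofReal (ckn f q p.2 p.1) else 0)
        * volume (A ∩ Ikn q p.1 p.2)
      = ∫⁻ x in A, ENNReal.ofReal (f x) ∂volume := by
  have hIkn_meas : ∀ k j : ℕ, MeasurableSet (Ikn q k j) := fun k j => measurableSet_Ico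
  have h1 : ∀ p : ℕ × ℕ, volume (A ∩ Ikn q p.1 p.2)
      = ∫⁻ x in A, Set.indicator (Ikn q p.1 p.2) (1 : ℝ → ℝ≥0∞) x ∂volume := by
    intro p
    rw [lintegral_indicator_one (hIkn_meas p.1 p.2), Measure.restrict_apply (hIkn_meas p.1 p.2),
      Set.inter_comm]
  calc ∑' (p : ℕ × ℕ), (if p.2 ∈ Finset.Icc 1 (q ^ p.1) then ENNReal.ofReal (ckn f q p.2 p.1) else 0)
        * volume (A ∩ Ikn q p.1 p.2)
      = ∑' (p : ℕ × ℕ), ∫⁻ x in A,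
          (if p.2 ∈ Finset.Icc 1 (q ^ p.1) then ENNReal.ofReal (ckn f q p.2 p.1) else 0)
            * Set.indicator (Ikn q p.1 p.2) (1 : ℝ → ℝ≥0∞) x ∂volume := by
        apply tsum_congr
        intro p
        rw [h1 p, ← lintegral_const_mul _ (measurable_one.indicator (hIkn_meas p.1 p.2))]
    _ = ∫⁻ x in A, ∑' (p : ℕ × ℕ),
          (if p.2 ∈ Finset.Icc 1 (q ^ p.1) then ENNReal.ofReal (ckn f q p.2 p.1) else 0)
            * Set.indicator (Ikn q p.1 p.2) (1 : ℝ → ℝ≥0∞) x ∂volume := by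
        exact (lintegral_tsum (μ := volume.restrict A) (f := fun (p : ℕ × ℕ) (x : ℝ) =>
          (if p.2 ∈ Finset.Icc 1 (q ^ p.1) then ENNReal.ofReal (ckn f q p.2 p.1) else 0)
            * Set.indicator (Ikn q p.1 p.2) (1 : ℝ → ℝ≥0∞) x)
          (fun p => ((measurable_one.indicator
          (hIkn_meas p.1 p.2)).const_mul _).aemeasurable)).symm
    _ = ∫⁻ x in A, ENNReal.ofReal (f x) ∂volume := by
        apply lintegral_congr_ae
        apply ae_restrict_of_ae
        filter_upwards [hlsc] with x hx
        apply D_eq hq hf hsupp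
        by_cases hmem : x ∈ Set.Ico (0:ℝ) 1
        · exact Or.inr ⟨hmem, hx hmem⟩
        · exact Or.inl hmem

end Aux4

section Aux5

variable {q : ℕ} {f : ℝ → ℝ}

noncomputable def wgt (f : ℝ → ℝ) (q : ℕ) (p : ℕ × ℕ) : ℝ≥0∞ :=
  if p.2 ∈ Finset.Icc 1 (q ^ p.1) then
    ENNReal.ofReal (ckn f q p.2 p.1) * ENNReal.ofReal (((q:ℝ) ^ p.1)⁻¹) else 0

lemma lintegral_ofReal_f (hq : 2 ≤ q) (hf_meas : Measurable f) (hf : ∀ x, 0 ≤ f x)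
    (hsupp : ∀ x, x ∉ Set.Ico (0:ℝ) 1 → f x = 0)
    (hf_pdf : ∫ x in Set.Ico (0:ℝ) 1, f x = 1) :
    ∫⁻ x, ENNReal.ofReal (f x) ∂(volume : Measure ℝ) = 1 := by
  have hint : Integrable f (volume.restrict (Set.Ico (0:ℝ) 1)) := by
    by_contra h
    rw [integral_undef h] at hf_pdf
    norm_num at hf_pdf
  have h1 : ∫⁻ x in Set.Ico (0:ℝ) 1, ENNReal.ofReal (f x) ∂volume = 1 := by
    rw [← ofReal_integral_eq_lintegral_ofReal hint
      (Filter.Eventually.of_forall (fun x => hf x)), hf_pdf, ENNReal.ofReal_one]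
  have h2 : ∫⁻ x in (Set.Ico (0:ℝ) 1)ᶜ, ENNReal.ofReal (f x) ∂volume = 0 := by
    rw [setLIntegral_congr_fun measurableSet_Ico.compl
      (fun x hx => by rw [hsupp x hx, ENNReal.ofReal_zero])]
    simp
  rw [← lintegral_add_compl (fun x => ENNReal.ofReal (f x)) measurableSet_Ico, h1, h2, add_zero]

lemma tsum_wgt (hq : 2 ≤ q) (hf_meas : Measurable f) (hf : ∀ x, 0 ≤ f x)
    (hsupp : ∀ x, x ∉ Set.Ico (0:ℝ) 1 → f x = 0)
    (hf_pdf : ∫ x in Set.Ico (0:ℝ) 1, f x = 1)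
    (hlsc : ∀ᵐ x ∂(volume : Measure ℝ), x ∈ Set.Ico (0:ℝ) 1 → LowerSemicontinuousAt f x) :
    ∑' p : ℕ × ℕ, wgt f q p = 1 := by
  have h0 : ∑' p : ℕ × ℕ, wgt f q p
      = ∑' (p : ℕ × ℕ), (if p.2 ∈ Finset.Icc 1 (q ^ p.1) then
          ENNReal.ofReal (ckn f q p.2 p.1) else 0) * volume (Set.univ ∩ Ikn q p.1 p.2) := by
    apply tsum_congr
    intro p
    rw [Set.univ_inter, vol_Ikn hq, wgt]
    by_cases hp : p.2 ∈ Finset.Icc 1 (q ^ p.1)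
    · rw [if_pos hp, if_pos hp]
    · rw [if_neg hp, if_neg hp, zero_mul]
  rw [h0, key hq hf_meas hf hsupp hlsc Set.univ MeasurableSet.univ, Measure.restrict_univ,
    lintegral_ofReal_f hq hf_meas hf hsupp hf_pdf]

lemma slice_vol (hq : 2 ≤ q) {k j : ℕ} (A : Set ℝ) :
    (volume.restrict (Set.Ico (0:ℝ) 1)) {u : ℝ | ((j:ℝ) - 1 + u) / (q:ℝ) ^ k ∈ A}
      = ENNReal.ofReal ((q:ℝ) ^ k) * volume (A ∩ Ikn q k j) := by
  have hqk : (0:ℝ) < (q:ℝ) ^ k := qpow_pos hq k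
  rw [Measure.restrict_apply' measurableSet_Ico]
  have hset : {u : ℝ | ((j:ℝ) - 1 + u) / (q:ℝ) ^ k ∈ A} ∩ Set.Ico (0:ℝ) 1
      = (fun u : ℝ => ((j:ℝ) - 1 + u) / (q:ℝ) ^ k) ⁻¹' (A ∩ Ikn q k j) := by
    ext u
    simp only [Set.mem_inter_iff, Set.mem_setOf_eq, Set.mem_preimage, Set.mem_Ico, Ikn]
    constructor
    · rintro ⟨hA, h0, h1⟩
      refine ⟨hA, ?_, ?_⟩
      · exact (div_le_div_iff_of_pos_right hqk).mpr (by linarith)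
      · apply (div_lt_div_iff_of_pos_right hqk).mpr
        linarith
    · rintro ⟨hA, h0, h1⟩
      have h0' : (j:ℝ) - 1 ≤ (j:ℝ) - 1 + u := (div_le_div_iff_of_pos_right hqk).mp h0
      have h1' : (j:ℝ) - 1 + u < (j:ℝ) := (div_lt_div_iff_of_pos_right hqk).mp h1
      exact ⟨hA, by linarith, by linarith⟩
  rw [hset]
  have hcomp : (fun u : ℝ => ((j:ℝ) - 1 + u) / (q:ℝ) ^ k)
      = (fun v : ℝ => v * ((q:ℝ) ^ k)⁻¹) ∘ (fun u : ℝ => ((j:ℝ) - 1) + u) := by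
    funext u
    simp [div_eq_mul_inv, add_assoc]
  rw [hcomp, Set.preimage_comp, measure_preimage_add,
    Real.volume_preimage_mul_right (by positivity : ((q:ℝ)^k)⁻¹ ≠ 0)]
  congr 1
  rw [inv_inv, abs_of_pos hqk]

lemma T_iter (hq : 2 ≤ q) : ∀ (k j : ℕ), 1 ≤ j → j ≤ q ^ k → ∀ u : ℝ, u ∈ Set.Ico (0:ℝ) 1 →
    (T q)^[k] (((j:ℝ) - 1 + u) / (q:ℝ) ^ k) = u := by
  intro k
  induction k with
  | zero =>
    intro j hj1 hj2 u hu
    have hq0 : q ^ 0 = 1 := pow_zero q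
    have : j = 1 := by omega
    subst this
    simp
  | succ k ih =>
    intro j hj1 hj2 u hu
    have hqk : (0:ℝ) < (q:ℝ) ^ k := qpow_pos hq k
    set a := (j - 1) / q ^ k with ha
    set b := (j - 1) % q ^ k with hb
    have hdm : q ^ k * a + b = j - 1 := Nat.div_add_mod _ _
    have hblt : b < q ^ k := Nat.mod_lt _ (by positivity)
    have hx : ((j:ℝ) - 1 + u) / (q:ℝ) ^ (k+1)
        = ((a:ℝ) + ((b:ℝ) + u) / (q:ℝ) ^ k) / (q:ℝ) := by
      have hjr : (j:ℝ) - 1 = (q:ℝ) ^ k * (a:ℝ) + (b:ℝ) := by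
        have hc : ((q ^ k * a + b : ℕ) : ℝ) = ((j - 1 : ℕ) : ℝ) := by rw [hdm]
        rw [Nat.cast_sub hj1] at hc
        push_cast at hc
        linarith
      rw [hjr, pow_succ]
      field_simp
      ring
    rw [Function.iterate_succ_apply]
    have hT : T q (((j:ℝ) - 1 + u) / (q:ℝ) ^ (k+1)) = ((b:ℝ) + u) / (q:ℝ) ^ k := by
      rw [T, hx]
      have hq0 : (q:ℝ) ≠ 0 := by positivity
      have : (q:ℝ) * (((a:ℝ) + ((b:ℝ) + u) / (q:ℝ) ^ k) / (q:ℝ))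
          = (a:ℝ) + ((b:ℝ) + u) / (q:ℝ) ^ k := by field_simp
      rw [this, Int.fract_natCast_add, Int.fract_eq_self.mpr]
      constructor
      · exact div_nonneg (add_nonneg (Nat.cast_nonneg b) hu.1) hqk.le
      · rw [div_lt_one hqk]
        have : (b:ℝ) + 1 ≤ (q:ℝ)^k := by exact_mod_cast Nat.succ_le_of_lt hblt
        linarith [hu.2]
    rw [hT]
    have hb1 : ((b:ℝ) + u) / (q:ℝ)^k = ((((b+1:ℕ)):ℝ) - 1 + u) / (q:ℝ)^k := by push_cast; ring
    rw [hb1]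
    exact ih (b+1) (Nat.succ_le_succ (Nat.zero_le b)) (Nat.succ_le_of_lt hblt) u hu

end Aux5

section Aux6

variable {q : ℕ} {f : ℝ → ℝ}

noncomputable def mu01 : Measure ℝ := volume.restrict (Set.Ico (0:ℝ) 1)

noncomputable def nuM (f : ℝ → ℝ) (q : ℕ) : Measure (ℕ × ℕ) :=
  Measure.count.withDensity (wgt f q)

noncomputable def PP (f : ℝ → ℝ) (q : ℕ) : Measure ((ℕ × ℕ) × ℝ) :=
  (nuM f q).prod mu01

instance : IsProbabilityMeasure (mu01) := by
  constructor
  rw [mu01, Measure.restrict_apply_univ, Real.volume_Ico]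
  norm_num

lemma nuM_apply (S : Set (ℕ × ℕ)) : nuM f q S = ∑' p : ℕ × ℕ, S.indicator (wgt f q) p := by
  rw [nuM, withDensity_apply _ ((Set.to_countable S).measurableSet),
    ← lintegral_indicator ((Set.to_countable S).measurableSet), lintegral_count]

lemma PP_apply {E : Set ((ℕ × ℕ) × ℝ)} (hE : MeasurableSet E) :
    PP f q E = ∑' p : ℕ × ℕ, wgt f q p * mu01 (Prod.mk p ⁻¹' E) := by
  rw [PP, Measure.prod_apply hE, nuM,
    lintegral_withDensity_eq_lintegral_mul _ (measurable_of_countable _)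
      (measurable_of_countable _), lintegral_count]
  rfl

end Aux6

lemma mu01_def : mu01 = volume.restrict (Set.Ico (0:ℝ) 1) := rfl

theorem stmt5
    (q : ℕ) (hq : 2 ≤ q)
    (f : ℝ → ℝ) (hf_meas : Measurable f) (hf_nonneg : ∀ x, 0 ≤ f x)
    (hf_supp : ∀ x, x ∉ Set.Ico (0:ℝ) 1 → f x = 0)
    (hf_pdf : ∫ x in Set.Ico (0:ℝ) 1, f x = 1)
    -- `f` is lower semi-continuous at Lebesgue-almost every point of `[0,1)`
    (hf_lsc : ∀ᵐ x ∂(volume : Measure ℝ),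
      x ∈ Set.Ico (0:ℝ) 1 → LowerSemicontinuousAt f x) :
    ∃ (Ω : Type) (_ : MeasurableSpace Ω) (ℙ : Measure Ω) (_ : IsProbabilityMeasure ℙ)
      (Y : Ω → ℝ) (N : Ω → ℕ),
      Measurable Y ∧ Measurable N ∧
      -- the law of `Y` has density `f`
      Measure.map Y ℙ = volume.withDensity (fun x => ENNReal.ofReal (f x)) ∧
      -- `T^N(Y)` is uniformly distributed on `[0,1)`
      Measure.map (fun ω => (T q)^[N ω] (Y ω)) ℙ = volume.restrict (Set.Ico (0:ℝ) 1) ∧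
      -- `T^N(Y)` is independent of `(N, ⌊q^N Y⌋)`
      ProbabilityTheory.IndepFun (fun ω => (T q)^[N ω] (Y ω))
        (fun ω => (N ω, ⌊(q : ℝ) ^ (N ω) * Y ω⌋)) ℙ ∧
      -- joint law of `{N ≤ n}` and `Y`
      ∀ n : ℕ, ∀ A : Set ℝ, MeasurableSet A → A ⊆ Set.Ico (0:ℝ) 1 →
        (ℙ ({ω | N ω ≤ n} ∩ Y ⁻¹' A)).toReal
          = ∑ k ∈ Finset.range (n + 1), ∑ j ∈ Finset.Icc 1 (q ^ k),
              ckn f q j k * (volume (A ∩ Ikn q k j)).toReal := by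
  classical
  haveI hν : IsProbabilityMeasure (nuM f q) := ⟨by
    rw [nuM_apply, Set.indicator_univ]
    exact tsum_wgt hq hf_meas hf_nonneg hf_supp hf_pdf hf_lsc⟩
  haveI hP : IsProbabilityMeasure (PP f q) := by rw [PP]; infer_instance
  set Y : (ℕ × ℕ) × ℝ → ℝ := fun ω => ((ω.1.2:ℝ) - 1 + ω.2) / (q:ℝ) ^ ω.1.1 with hYdef
  set N : (ℕ × ℕ) × ℝ → ℕ := fun ω => ω.1.1 with hNdef
  have hYm : Measurable Y := by
    apply Measurable.div
    · exact (((measurable_of_countable (fun m : ℕ => (m:ℝ))).comp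
        measurable_fst.snd).sub measurable_const).add measurable_snd
    · exact (measurable_of_countable (fun m : ℕ => (q:ℝ) ^ m)).comp measurable_fst.fst
  have hNm : Measurable N := measurable_fst.fst
  -- per-point term computation
  have hterm : ∀ (A : Set ℝ), ∀ p : ℕ × ℕ,
      wgt f q p * mu01 (Prod.mk p ⁻¹' (Y ⁻¹' A))
      = (if p.2 ∈ Finset.Icc 1 (q ^ p.1) then ENNReal.ofReal (ckn f q p.2 p.1) else 0)
          * volume (A ∩ Ikn q p.1 p.2) := by
    intro A p
    rcases p with ⟨k, j⟩
    by_cases hp : j ∈ Finset.Icc 1 (q ^ k)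
    · rw [wgt]
      dsimp only
      rw [if_pos hp, if_pos hp]
      have hsl : mu01 (Prod.mk (k, j) ⁻¹' (Y ⁻¹' A))
          = ENNReal.ofReal ((q:ℝ) ^ k) * volume (A ∩ Ikn q k j) := slice_vol hq A
      rw [hsl, mul_assoc, ← mul_assoc (ENNReal.ofReal (((q:ℝ)^k)⁻¹)),
        ← ENNReal.ofReal_mul (by positivity), inv_mul_cancel₀ (ne_of_gt (qpow_pos hq k)),
        ENNReal.ofReal_one, one_mul]
    · rw [wgt]
      dsimp only
      rw [if_neg hp, if_neg hp, zero_mul, zero_mul]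
  have hmapY : Measure.map Y (PP f q) = volume.withDensity (fun x => ENNReal.ofReal (f x)) := by
    apply Measure.ext
    intro A hA
    rw [Measure.map_apply hYm hA, PP_apply (hYm hA), withDensity_apply _ hA,
      ← key hq hf_meas hf_nonneg hf_supp hf_lsc A hA]
    exact tsum_congr (hterm A)
  -- almost-every ω is "good"
  have hGae : ∀ᵐ ω ∂(PP f q),
      ω.1.2 ∈ Finset.Icc 1 (q ^ ω.1.1) ∧ ω.2 ∈ Set.Ico (0:ℝ) 1 := by
    set S : Set (ℕ × ℕ) := {p | p.2 ∈ Finset.Icc 1 (q ^ p.1)} with hS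
    have hB1 : PP f q ((Sᶜ) ×ˢ (Set.univ : Set ℝ)) = 0 := by
      rw [PP, Measure.prod_prod, nuM_apply]
      have hz : ∑' p : ℕ × ℕ, (Sᶜ).indicator (wgt f q) p = 0 := by
        rw [ENNReal.tsum_eq_zero]
        intro p
        by_cases hp : p ∈ Sᶜ
        · rw [Set.indicator_of_mem hp, wgt, if_neg (by simpa [hS, Set.mem_compl_iff] using hp)]
        · rw [Set.indicator_of_notMem hp]
      rw [hz, zero_mul]
    have hB2 : PP f q ((Set.univ : Set (ℕ×ℕ)) ×ˢ (Set.Ico (0:ℝ) 1)ᶜ) = 0 := by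
      rw [PP, Measure.prod_prod]
      have hz : mu01 ((Set.Ico (0:ℝ) 1)ᶜ) = 0 := by
        rw [mu01_def, Measure.restrict_apply measurableSet_Ico.compl, Set.compl_inter_self]
        exact measure_empty
      rw [hz, mul_zero]
    rw [ae_iff]
    have hsub : {ω : (ℕ×ℕ)×ℝ | ¬(ω.1.2 ∈ Finset.Icc 1 (q ^ ω.1.1) ∧ ω.2 ∈ Set.Ico (0:ℝ) 1)}
        ⊆ ((Sᶜ) ×ˢ (Set.univ : Set ℝ)) ∪ ((Set.univ : Set (ℕ×ℕ)) ×ˢ (Set.Ico (0:ℝ) 1)ᶜ) := by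
      intro ω hω
      simp only [Set.mem_setOf_eq, not_and_or] at hω
      rcases hω with h | h
      · exact Or.inl ⟨h, Set.mem_univ _⟩
      · exact Or.inr ⟨Set.mem_univ _, h⟩
    exact measure_mono_null hsub (measure_union_null hB1 hB2)
  have heqT : (fun ω => (T q)^[N ω] (Y ω)) =ᵐ[PP f q] Prod.snd := by
    filter_upwards [hGae] with ω hω
    obtain ⟨h1, h2⟩ := hω
    rw [Finset.mem_Icc] at h1
    exact T_iter hq ω.1.1 ω.1.2 h1.1 h1.2 ω.2 h2
  have hTm : Measurable (fun ω => (T q)^[N ω] (Y ω)) := by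
    have hT1 : Measurable (T q) := measurable_fract.comp (measurable_id.const_mul (q:ℝ))
    have hg : Measurable (fun c : ℝ × ℕ => (T q)^[c.2] c.1) :=
      measurable_from_prod_countable_left (fun k => hT1.iterate k)
    exact hg.comp (hYm.prodMk hNm)
  have hmapT : Measure.map (fun ω => (T q)^[N ω] (Y ω)) (PP f q)
      = volume.restrict (Set.Ico (0:ℝ) 1) := by
    rw [Measure.map_congr heqT, PP, Measure.map_snd_prod, measure_univ, one_smul, mu01_def]
  have hpair : (fun ω => (N ω, ⌊(q:ℝ)^(N ω) * Y ω⌋)) =ᵐ[PP f q]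
      (fun ω : (ℕ×ℕ)×ℝ => (ω.1.1, (ω.1.2 : ℤ) - 1)) := by
    filter_upwards [hGae] with ω hω
    obtain ⟨h1, h2⟩ := hω
    have hv : (q:ℝ)^(N ω) * Y ω = ((ω.1.2:ℝ) - 1) + ω.2 := by
      have hne : ((q:ℝ) ^ ω.1.1) ≠ 0 := ne_of_gt (qpow_pos hq _)
      show (q:ℝ)^ω.1.1 * (((ω.1.2:ℝ) - 1 + ω.2) / (q:ℝ)^ω.1.1) = _
      field_simp
    have hfl : ⌊((ω.1.2:ℝ) - 1) + ω.2⌋ = (ω.1.2:ℤ) - 1 := by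
      have hc : ((ω.1.2:ℝ) - 1) = (((ω.1.2:ℤ) - 1 : ℤ):ℝ) := by push_cast; ring
      rw [hc, Int.floor_intCast_add, Int.floor_eq_zero_iff.mpr h2, add_zero]
    rw [hv, hfl]
  have hbase : ProbabilityTheory.IndepFun Prod.fst Prod.snd (PP f q) := by
    rw [ProbabilityTheory.indepFun_iff_map_prod_eq_prod_map_map
      measurable_fst.aemeasurable measurable_snd.aemeasurable]
    have hid : (fun ω : (ℕ×ℕ)×ℝ => (ω.1, ω.2)) = id := funext fun ω => rfl
    rw [hid, Measure.map_id]
    rw [show (PP f q) = (nuM f q).prod mu01 from rfl, Measure.map_fst_prod, Measure.map_snd_prod]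
    rw [measure_univ, measure_univ, one_smul, one_smul]
  have hindep : ProbabilityTheory.IndepFun (fun ω => (T q)^[N ω] (Y ω))
      (fun ω => (N ω, ⌊(q : ℝ) ^ (N ω) * Y ω⌋)) (PP f q) := by
    have h3 := (hbase.symm.comp measurable_id
      (measurable_of_countable (fun p : ℕ × ℕ => (p.1, (p.2:ℤ) - 1))))
    exact h3.congr heqT.symm hpair.symm
  refine ⟨(ℕ × ℕ) × ℝ, inferInstance, PP f q, hP, Y, N, hYm, hNm, hmapY, hmapT, hindep, ?_⟩
  -- the joint-law formula
  intro n A hA hAsub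
  have hEmeas : MeasurableSet ({ω | N ω ≤ n} ∩ Y ⁻¹' A) :=
    (hNm ((Set.to_countable {m : ℕ | m ≤ n}).measurableSet)).inter (hYm hA)
  rw [PP_apply hEmeas]
  have hsl : ∀ p : ℕ × ℕ, wgt f q p * mu01 (Prod.mk p ⁻¹' ({ω | N ω ≤ n} ∩ Y ⁻¹' A))
      = if p.1 ≤ n then ((if p.2 ∈ Finset.Icc 1 (q ^ p.1) then
          ENNReal.ofReal (ckn f q p.2 p.1) else 0) * volume (A ∩ Ikn q p.1 p.2)) else 0 := by
    intro p
    by_cases hk : p.1 ≤ n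
    · rw [if_pos hk, ← hterm A p]
      congr 1
      congr 1
      ext u
      simp only [Set.mem_preimage, Set.mem_inter_iff, Set.mem_setOf_eq]
      exact and_iff_right hk
    · rw [if_neg hk]
      have : Prod.mk p ⁻¹' ({ω | N ω ≤ n} ∩ Y ⁻¹' A) = ∅ := by
        ext u
        simp only [Set.mem_preimage, Set.mem_inter_iff, Set.mem_setOf_eq, Set.mem_empty_iff_false,
          iff_false]
        intro h
        exact hk h.1
      rw [this, measure_empty, mul_zero]
  rw [tsum_congr hsl]
  rw [ENNReal.tsum_prod (f := fun k j => if k ≤ n then ((if j ∈ Finset.Icc 1 (q ^ k) then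
      ENNReal.ofReal (ckn f q j k) else 0) * volume (A ∩ Ikn q k j)) else 0)]
  have hinner : ∀ k : ℕ, (∑' j : ℕ, if k ≤ n then ((if j ∈ Finset.Icc 1 (q ^ k) then
      ENNReal.ofReal (ckn f q j k) else 0) * volume (A ∩ Ikn q k j)) else 0)
      = if k ≤ n then (∑ j ∈ Finset.Icc 1 (q ^ k),
          ENNReal.ofReal (ckn f q j k) * volume (A ∩ Ikn q k j)) else 0 := by
    intro k
    by_cases hk : k ≤ n
    · simp only [if_pos hk]
      rw [tsum_eq_sum (s := Finset.Icc 1 (q ^ k)) (fun j hj => by rw [if_neg hj, zero_mul])]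
      exact Finset.sum_congr rfl (fun j hj => by rw [if_pos hj])
    · simp only [if_neg hk, tsum_zero]
  rw [tsum_congr hinner]
  rw [tsum_eq_sum (s := Finset.range (n + 1)) (fun k hk => by
    rw [if_neg (by simpa using hk)])]
  have hfin : ∀ k ∈ Finset.range (n+1), ∀ j ∈ Finset.Icc 1 (q ^ k),
      ENNReal.ofReal (ckn f q j k) * volume (A ∩ Ikn q k j) ≠ ⊤ := by
    intro k _ j _
    apply ENNReal.mul_ne_top ENNReal.ofReal_ne_top
    have hle : volume (A ∩ Ikn q k j) ≤ volume (Set.Ico (0:ℝ) 1) :=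
      measure_mono (Set.inter_subset_left.trans hAsub)
    rw [Real.volume_Ico] at hle
    exact ne_top_of_le_ne_top (by simp) hle
  have hsum_eq : ∑ k ∈ Finset.range (n + 1), (if k ≤ n then (∑ j ∈ Finset.Icc 1 (q ^ k),
      ENNReal.ofReal (ckn f q j k) * volume (A ∩ Ikn q k j)) else 0)
      = ∑ k ∈ Finset.range (n + 1), ∑ j ∈ Finset.Icc 1 (q ^ k),
          ENNReal.ofReal (ckn f q j k) * volume (A ∩ Ikn q k j) :=
    Finset.sum_congr rfl (fun k hk => by rw [if_pos (by simpa [Nat.lt_succ_iff] using hk)])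
  rw [hsum_eq]
  rw [ENNReal.toReal_sum (fun k hk => by
    exact (ENNReal.sum_lt_top.mpr (fun j hj => lt_top_iff_ne_top.mpr (hfin k hk j hj))).ne)]
  apply Finset.sum_congr rfl
  intro k hk
  rw [ENNReal.toReal_sum (fun j hj => hfin k hk j hj)]
  apply Finset.sum_congr rfl
  intro j hj
  rw [Finset.mem_Icc] at hj
  rw [ENNReal.toReal_mul, ENNReal.toReal_ofReal (ckn_nonneg hq hf_nonneg hj.1 k)]
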